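/- arXiv:1504.00783 — 4 statements merged into one kernel-verified Lean document; each statement's English description precedes it below -/
import Mathlib

section
/- Let Δ ∈ ℂ and let H be the open XXZ Hamiltonian on (ℂ²)^{⊗n}. Then: (a) for n ≥ 2, σ⁺₂ = (1/4)·σᶻ₁·[σ⁺₁, [H, σᶻ₁]]; (b) for n ≥ 3 and every x with 3 ≤ x ≤ n, σ⁺ₓ = −σ⁺_{x−2} − (1/2)·σᶻ_{x−1}·[σ⁻_{x−1}, σ⁺_{x−1} H σ⁺_{x−1}]. -/
open Matrix

noncomputable section

abbrev M2 : Type := Matrix (Fin 2) (Fin 2) ℂ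

/-- Pauli matrices and raising/lowering operators. -/
def σx : M2 := !![0, 1; 1, 0]
def σy : M2 := !![0, -Complex.I; Complex.I, 0]
def σz : M2 := !![1, 0; 0, -1]
def σ0 : M2 := 1
def σp : M2 := (1/2 : ℂ) • (σx + Complex.I • σy)
def σm : M2 := (1/2 : ℂ) • (σx - Complex.I • σy)

/-- Operators on the spin chain `(ℂ²)^{⊗n}`. -/
abbrev ChainOp (n : ℕ) : Type := Matrix (Fin n → Fin 2) (Fin n → Fin 2) ℂ

/-- A single-site operator `a` acting at site `x` (identity elsewhere). -/
def site {n : ℕ} (x : Fin n) (a : M2) : ChainOp n :=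
  Matrix.of fun i j =>
    a (i x) (j x) * ∏ y ∈ Finset.univ.filter (fun y => y ≠ x), (if i y = j y then (1:ℂ) else 0)

/-- The open XXZ Hamiltonian `H = Σ_{x=1}^{n-1} h_{x,x+1}` with anisotropy `Δ`. -/
def XXZ (Δ : ℂ) (n : ℕ) : ChainOp n :=
  ∑ x : Fin n,
    if h : (x : ℕ) + 1 < n then
      (2:ℂ) • (site x σp * site ⟨(x:ℕ)+1, h⟩ σm) + (2:ℂ) • (site x σm * site ⟨(x:ℕ)+1, h⟩ σp)
        + Δ • (site x σz * site ⟨(x:ℕ)+1, h⟩ σz)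
    else 0

/- ### auxiliary: product-form operators -/

def prodSite {n : ℕ} (f : Fin n → M2) : ChainOp n :=
  Matrix.of fun i j => ∏ y, f y (i y) (j y)

lemma prodSite_mul {n : ℕ} (f g : Fin n → M2) :
    prodSite f * prodSite g = prodSite (fun y => f y * g y) := by
  ext i j
  simp only [prodSite, Matrix.of_apply, Matrix.mul_apply, ← Finset.prod_mul_distrib]
  rw [Fintype.prod_sum (fun y v => f y (i y) v * g y v (j y))]

lemma site_eq {n : ℕ} (x : Fin n) (a : M2) :
    site x a = prodSite (Function.update (fun _ => (1:M2)) x a) := by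
  ext i j
  simp only [site, prodSite, Matrix.of_apply]
  rw [← Finset.mul_prod_erase Finset.univ _ (Finset.mem_univ x), ← Finset.filter_ne']
  simp only [Function.update_self]
  congr 1
  refine Finset.prod_congr rfl fun y hy => ?_
  simp only [Finset.mem_filter] at hy
  rw [Function.update_of_ne hy.2, Matrix.one_apply]

lemma site_mul_same {n : ℕ} (x : Fin n) (a b : M2) :
    site x a * site x b = site x (a * b) := by
  rw [site_eq, site_eq, site_eq, prodSite_mul]
  refine congrArg prodSite (funext fun y => ?_)
  by_cases hy : y = x
  · subst hy; simp
  · simp [Function.update_of_ne hy]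

lemma site_comm {n : ℕ} {x y : Fin n} (h : x ≠ y) (a b : M2) :
    site x a * site y b = site y b * site x a := by
  rw [site_eq, site_eq, prodSite_mul, prodSite_mul]
  refine congrArg prodSite (funext fun z => ?_)
  simp only [Function.update_apply]
  by_cases hzx : z = x
  · subst hzx
    rw [if_pos rfl, if_neg h]
    simp
  · rw [if_neg hzx]
    by_cases hzy : z = y <;> simp [hzy]

lemma site_one {n : ℕ} (x : Fin n) : site x (1 : M2) = 1 := by
  rw [site_eq]
  have : Function.update (fun _ => (1:M2)) x 1 = fun _ => (1:M2) := by
    funext y; by_cases hy : y = x <;> simp [hy]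
  rw [this]
  ext i j
  simp only [prodSite, Matrix.of_apply, Matrix.one_apply]
  by_cases hij : i = j
  · subst hij; simp
  · rw [if_neg hij]
    obtain ⟨y, hy⟩ := Function.ne_iff.mp hij
    exact Finset.prod_eq_zero (Finset.mem_univ y) (if_neg hy)

lemma site_zero {n : ℕ} (x : Fin n) : site x (0 : M2) = 0 := by
  ext i j; simp [site]

lemma site_sub {n : ℕ} (x : Fin n) (a b : M2) :
    site x (a - b) = site x a - site x b := by
  ext i j; simp [site, sub_mul]

lemma site_neg {n : ℕ} (x : Fin n) (a : M2) :
    site x (-a) = -site x a := by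
  ext i j; simp [site]

/- ### rearrangement lemmas -/

lemma L1 {n : ℕ} {x y : Fin n} (h : y ≠ x) (a b c : M2) :
    (site x a * site y b) * site x c = site x (a * c) * site y b := by
  rw [mul_assoc, site_comm h, ← mul_assoc, site_mul_same]

lemma L2 {n : ℕ} (x y : Fin n) (a b c : M2) :
    site x c * (site x a * site y b) = site x (c * a) * site y b := by
  rw [← mul_assoc, site_mul_same]

lemma L3 {n : ℕ} (x y : Fin n) (a b c : M2) :
    (site y b * site x a) * site x c = site y b * site x (a * c) := by
  rw [mul_assoc, site_mul_same]

lemma L4 {n : ℕ} {x y : Fin n} (h : x ≠ y) (a b c : M2) :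
    site x c * (site y b * site x a) = site y b * site x (c * a) := by
  rw [← mul_assoc, site_comm h, mul_assoc, site_mul_same]

lemma Lcomm {n : ℕ} {x y u : Fin n} (hx : x ≠ u) (hy : y ≠ u) (a b c : M2) :
    (site x a * site y b) * site u c = site u c * (site x a * site y b) := by
  rw [mul_assoc, site_comm hy, ← mul_assoc, site_comm hx, mul_assoc]

/- ### 2×2 matrix facts -/

lemma σp_eq : σp = !![0,1;0,0] := by
  ext i j; fin_cases i <;> fin_cases j <;>
    simp [σp, σx, σy] <;> norm_num [Complex.ext_iff]

lemma σm_eq : σm = !![0,0;1,0] := by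
  ext i j; fin_cases i <;> fin_cases j <;>
    simp [σm, σx, σy] <;> norm_num [Complex.ext_iff]

lemma hpz : σp * σz = -σp := by
  rw [σp_eq, σz]; ext i j; fin_cases i <;> fin_cases j <;> norm_num [Matrix.mul_fin_two]

lemma hzp : σz * σp = σp := by
  rw [σp_eq, σz]; norm_num [Matrix.mul_fin_two]

lemma hmz : σm * σz = σm := by
  rw [σm_eq, σz]; ext i j; fin_cases i <;> fin_cases j <;> norm_num [Matrix.mul_fin_two]

lemma hzm : σz * σm = -σm := by
  rw [σm_eq, σz]; ext i j; fin_cases i <;> fin_cases j <;> norm_num [Matrix.mul_fin_two]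

lemma hpp : σp * σp = 0 := by
  rw [σp_eq]; norm_num [Matrix.mul_fin_two]
  ext i j; fin_cases i <;> fin_cases j <;> simp

lemma hpmp : σp * σm * σp = σp := by
  rw [σp_eq, σm_eq]; ext i j; fin_cases i <;> fin_cases j <;> norm_num [Matrix.mul_fin_two]

lemma hppp : σp * σp * σp = 0 := by rw [hpp, zero_mul]

lemma hpzp : σp * σz * σp = 0 := by
  rw [hpz, neg_mul, hpp, neg_zero]

lemma g2 : σz * (σp * σm) - σz * (σm * σp) = 1 := by
  rw [σp_eq, σm_eq, σz]
  norm_num [Matrix.mul_fin_two]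
  ext i j; fin_cases i <;> fin_cases j <;> simp

lemma g1 : σz * (σm * σp) - σz * (σp * σm) = -1 := by
  rw [← neg_sub, g2]

/- ### key computation for part (a) -/

lemma commH {n : ℕ} (h0 : 0 < n) (h1 : 1 < n) (Δ : ℂ) :
    XXZ Δ n * site ⟨0, h0⟩ σz - site ⟨0, h0⟩ σz * XXZ Δ n
      = (-4:ℂ) • (site ⟨0, h0⟩ σp * site ⟨1, h1⟩ σm)
        + (4:ℂ) • (site ⟨0, h0⟩ σm * site ⟨1, h1⟩ σp) := by
  have hne : (⟨1, h1⟩ : Fin n) ≠ ⟨0, h0⟩ := by simp [Fin.ext_iff]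
  rw [XXZ, Finset.sum_mul, Finset.mul_sum, ← Finset.sum_sub_distrib]
  rw [Finset.sum_eq_single (⟨0, h0⟩ : Fin n)]
  · have hcond : ((⟨0, h0⟩ : Fin n) : ℕ) + 1 < n := by simpa using h1
    rw [dif_pos hcond]
    have hcast : ∀ (h : ((⟨0, h0⟩ : Fin n) : ℕ) + 1 < n),
        (⟨((⟨0, h0⟩ : Fin n) : ℕ) + 1, h⟩ : Fin n) = ⟨1, h1⟩ := fun h => by
      simp [Fin.ext_iff]
    rw [hcast]
    simp only [add_mul, mul_add, smul_mul_assoc, mul_smul_comm, L1 hne, L2,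
      hpz, hzp, hmz, hzm, site_neg, neg_mul]
    module
  · intro b _ hb
    by_cases hbn : (b : ℕ) + 1 < n
    · rw [dif_pos hbn]
      have hx' : (⟨(b : ℕ) + 1, hbn⟩ : Fin n) ≠ ⟨0, h0⟩ := by simp [Fin.ext_iff]
      simp only [add_mul, mul_add, smul_mul_assoc, mul_smul_comm, Lcomm hb hx']
      abel
    · rw [dif_neg hbn]; simp
  · simp

/- ### sandwich lemmas for part (b) -/

lemma Lsand1 {n : ℕ} {u x : Fin n} (h : u ≠ x) (a b : M2) :
    site u σp * (site x a * site u b) * site u σp = site x a * site u (σp * b * σp) := by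
  rw [L4 h, L3]

lemma Lsand2 {n : ℕ} {u x : Fin n} (h : x ≠ u) (a b : M2) :
    site u σp * (site u a * site x b) * site u σp = site u (σp * a * σp) * site x b := by
  rw [L2, L1 h]

lemma Lfar {n : ℕ} {x y u : Fin n} (hx : x ≠ u) (hy : y ≠ u) (a b : M2) :
    site u σp * (site x a * site y b) * site u σp = 0 := by
  rw [mul_assoc, Lcomm hx hy, ← mul_assoc, site_mul_same, hpp, site_zero, zero_mul]

lemma sandH {n : ℕ} {u : ℕ} (hu1 : 1 ≤ u) (hu2 : u + 1 < n) (Δ : ℂ) :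
    site ⟨u, by omega⟩ σp * XXZ Δ n * site ⟨u, by omega⟩ σp
      = (2:ℂ) • (site (⟨u-1, by omega⟩ : Fin n) σp * site ⟨u, by omega⟩ σp)
        + (2:ℂ) • (site (⟨u, by omega⟩ : Fin n) σp * site ⟨u+1, hu2⟩ σp) := by
  have hUW : (⟨u, by omega⟩ : Fin n) ≠ ⟨u-1, by omega⟩ := by simp [Fin.ext_iff]; omega
  have hWU : (⟨u-1, by omega⟩ : Fin n) ≠ (⟨u, by omega⟩ : Fin n) := hUW.symm
  have hTU : (⟨u+1, hu2⟩ : Fin n) ≠ ⟨u, by omega⟩ := by simp [Fin.ext_iff]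
  rw [XXZ, Finset.mul_sum, Finset.sum_mul]
  have key : ∀ b : Fin n,
      site ⟨u, by omega⟩ σp *
          (if h : (b : ℕ) + 1 < n then
            (2:ℂ) • (site b σp * site ⟨(b:ℕ)+1, h⟩ σm) + (2:ℂ) • (site b σm * site ⟨(b:ℕ)+1, h⟩ σp)
              + Δ • (site b σz * site ⟨(b:ℕ)+1, h⟩ σz)
          else 0) * site ⟨u, by omega⟩ σp
      = (if b = (⟨u-1, by omega⟩ : Fin n) then
            (2:ℂ) • (site (⟨u-1, by omega⟩ : Fin n) σp * site (⟨u, by omega⟩ : Fin n) σp) else 0)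
        + (if b = (⟨u, by omega⟩ : Fin n) then
            (2:ℂ) • (site (⟨u, by omega⟩ : Fin n) σp * site ⟨u+1, hu2⟩ σp) else 0) := by
    intro b
    by_cases hb1 : b = (⟨u-1, by omega⟩ : Fin n)
    · subst hb1
      rw [if_pos rfl, if_neg hUW.symm, add_zero]
      have hcond : (u-1) + 1 < n := by omega
      rw [dif_pos hcond]
      have hcast : ∀ (h : ((⟨u-1, by omega⟩ : Fin n) : ℕ) + 1 < n),
          (⟨((⟨u-1, by omega⟩ : Fin n) : ℕ) + 1, h⟩ : Fin n) = ⟨u, by omega⟩ := fun h => by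
        simp [Fin.ext_iff]; omega
      rw [hcast]
      simp only [mul_add, add_mul, mul_smul_comm, smul_mul_assoc, Lsand1 hUW,
        hpmp, hppp, hpzp, site_zero, mul_zero, zero_mul, smul_zero, add_zero, zero_add]
    · by_cases hb2 : b = (⟨u, by omega⟩ : Fin n)
      · subst hb2
        rw [if_neg hb1, if_pos rfl, zero_add]
        have hcond : u + 1 < n := hu2
        rw [dif_pos hcond]
        have hcast : ∀ (h : ((⟨u, by omega⟩ : Fin n) : ℕ) + 1 < n),
            (⟨((⟨u, by omega⟩ : Fin n) : ℕ) + 1, h⟩ : Fin n) = ⟨u+1, hu2⟩ := fun h => by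
          simp [Fin.ext_iff]
        rw [hcast]
        simp only [mul_add, add_mul, mul_smul_comm, smul_mul_assoc, Lsand2 hTU,
          hpmp, hppp, hpzp, site_zero, mul_zero, zero_mul, smul_zero, add_zero, zero_add]
      · rw [if_neg hb1, if_neg hb2, add_zero]
        by_cases hbn : (b : ℕ) + 1 < n
        · rw [dif_pos hbn]
          have hx : b ≠ (⟨u, by omega⟩ : Fin n) := hb2
          have hx' : (⟨(b:ℕ)+1, hbn⟩ : Fin n) ≠ (⟨u, by omega⟩ : Fin n) := by
            simp only [ne_eq, Fin.ext_iff, Fin.val_mk] at hb1 hb2 ⊢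
            omega
          simp only [mul_add, add_mul, mul_smul_comm, smul_mul_assoc,
            Lfar hx hx', smul_zero, add_zero, zero_add]
        · rw [dif_neg hbn]; simp
  calc ∑ b : Fin n, site ⟨u, by omega⟩ σp *
          (if h : (b : ℕ) + 1 < n then
            (2:ℂ) • (site b σp * site ⟨(b:ℕ)+1, h⟩ σm) + (2:ℂ) • (site b σm * site ⟨(b:ℕ)+1, h⟩ σp)
              + Δ • (site b σz * site ⟨(b:ℕ)+1, h⟩ σz)
          else 0) * site ⟨u, by omega⟩ σp
      = ∑ b : Fin n,
        ((if b = (⟨u-1, by omega⟩ : Fin n) then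
            (2:ℂ) • (site (⟨u-1, by omega⟩ : Fin n) σp * site (⟨u, by omega⟩ : Fin n) σp) else 0)
        + (if b = (⟨u, by omega⟩ : Fin n) then
            (2:ℂ) • (site (⟨u, by omega⟩ : Fin n) σp * site ⟨u+1, hu2⟩ σp) else 0)) :=
        Finset.sum_congr rfl (fun b _ => key b)
    _ = _ := by
        rw [Finset.sum_add_distrib, Finset.sum_ite_eq', Finset.sum_ite_eq']
        simp


/-- recursive operator identities generating `σ⁺ₓ` from `H` and `σ⁺₁`.
Sites are numbered `1,…,n` in the informal statement; here site `x` corresponds to the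
index `x-1 : Fin n`. -/
theorem stmt1 (n : ℕ) (hn : 2 ≤ n) (Δ : ℂ) :
    (site (⟨1, by omega⟩ : Fin n) σp
      = (1/4 : ℂ) •
          (site (⟨0, by omega⟩ : Fin n) σz *
            (site (⟨0, by omega⟩ : Fin n) σp *
                (XXZ Δ n * site (⟨0, by omega⟩ : Fin n) σz
                  - site (⟨0, by omega⟩ : Fin n) σz * XXZ Δ n)
              - (XXZ Δ n * site (⟨0, by omega⟩ : Fin n) σz
                  - site (⟨0, by omega⟩ : Fin n) σz * XXZ Δ n) *
                site (⟨0, by omega⟩ : Fin n) σp)))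
    ∧ (∀ x : ℕ, ∀ _hx3 : 3 ≤ x, ∀ _hxn : x ≤ n,
        site (⟨x-1, by omega⟩ : Fin n) σp
          = -site (⟨x-3, by omega⟩ : Fin n) σp
            - (1/2 : ℂ) •
              (site (⟨x-2, by omega⟩ : Fin n) σz *
                (site (⟨x-2, by omega⟩ : Fin n) σm *
                    (site (⟨x-2, by omega⟩ : Fin n) σp * XXZ Δ n *
                      site (⟨x-2, by omega⟩ : Fin n) σp)
                  - (site (⟨x-2, by omega⟩ : Fin n) σp * XXZ Δ n *
                      site (⟨x-2, by omega⟩ : Fin n) σp) *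
                    site (⟨x-2, by omega⟩ : Fin n) σm))) := by
  have h0 : 0 < n := by omega
  have h1 : 1 < n := by omega
  constructor
  · rw [commH h0 h1 Δ]
    have hne : (⟨1, h1⟩ : Fin n) ≠ ⟨0, h0⟩ := by simp [Fin.ext_iff]
    simp only [mul_sub, smul_sub, mul_add, add_mul, mul_smul_comm, smul_mul_assoc,
      L2, L1 hne, hpp, site_zero, zero_mul, mul_zero, smul_zero, add_zero, zero_add,
      sub_zero, zero_sub]
    have hq : site (⟨0, h0⟩ : Fin n) (σz * (σm * σp))
        = site (⟨0, h0⟩ : Fin n) (σz * (σp * σm)) - 1 := by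
      have h : σz * (σm * σp) = σz * (σp * σm) - 1 := by rw [← g2]; abel
      simp only [h, site_sub, site_one]
    simp only [hq]
    simp only [mul_sub, sub_mul, mul_one, one_mul]
    module
  · intro x hx3 hxn
    have hu1 : 1 ≤ x - 2 := by omega
    have hu2 : (x - 2) + 1 < n := by omega
    have hs := sandH (n := n) hu1 hu2 Δ
    have e1 : (⟨x-2-1, by omega⟩ : Fin n) = ⟨x-3, by omega⟩ := by
      simp only [Fin.ext_iff]; omega
    have e2 : (⟨x-2+1, hu2⟩ : Fin n) = ⟨x-1, by omega⟩ := by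
      simp only [Fin.ext_iff]; omega
    rw [e1, e2] at hs
    rw [hs]
    have hUW : (⟨x-2, by omega⟩ : Fin n) ≠ ⟨x-3, by omega⟩ := by
      simp only [ne_eq, Fin.ext_iff]; omega
    have hTU : (⟨x-1, by omega⟩ : Fin n) ≠ ⟨x-2, by omega⟩ := by
      simp only [ne_eq, Fin.ext_iff]; omega
    simp only [mul_sub, smul_sub, mul_add, add_mul, mul_smul_comm, smul_mul_assoc,
      L2, L3, L4 hUW, L1 hTU]
    have hq : site (⟨x-2, by omega⟩ : Fin n) (σz * (σm * σp))
        = site (⟨x-2, by omega⟩ : Fin n) (σz * (σp * σm)) - 1 := by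
      have h : σz * (σm * σp) = σz * (σp * σm) - 1 := by rw [← g2]; abel
      simp only [h, site_sub, site_one]
    simp only [hq]
    simp only [mul_sub, sub_mul, mul_one, one_mul]
    module

end
end

section
/- Let η ∈ ℂ, Δ = cos η, h the XXZ interaction on ℂ²⊗ℂ², and define the 4×4 matrix R(φ) = (sin φ/2)·(h + cos η·1₄) − ((1+cos φ)/2)·sin η·1₄ + ((1−cos φ)/2)·sin η·(σᶻ⊗σᶻ) for φ ∈ ℂ. Then: (a) R(φ)ᵀ = R(φ) for all φ; (b) the derivative of φ ↦ R(φ) at φ = 0 equals (1/2)(h + cos η·1₄); (c) R(φ)·R(−φ) = (sin²η − sin²φ)·1₄ for all φ. -/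
open Matrix Kronecker

noncomputable section

abbrev M4 : Type := Matrix (Fin 2 × Fin 2) (Fin 2 × Fin 2) ℂ

/-- The XXZ interaction `h = 2σ⁺⊗σ⁻ + 2σ⁻⊗σ⁺ + Δ σᶻ⊗σᶻ`. -/
def hXXZ (Δ : ℂ) : M4 := (2:ℂ) • (σp ⊗ₖ σm) + (2:ℂ) • (σm ⊗ₖ σp) + Δ • (σz ⊗ₖ σz)

/-- The six-vertex R-matrix in the parametrization of the review. -/
def Rmat (η φ : ℂ) : M4 :=
  (Complex.sin φ / 2) • (hXXZ (Complex.cos η) + Complex.cos η • (1 : M4))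
    - ((1 + Complex.cos φ) / 2 * Complex.sin η) • (1 : M4)
    + ((1 - Complex.cos φ) / 2 * Complex.sin η) • (σz ⊗ₖ σz)


private lemma Rmat_apply' (η φ : ℂ) (i j : Fin 2 × Fin 2) :
    Rmat η φ i j =
      Complex.sin φ * (((1/2:ℂ) • (hXXZ (Complex.cos η) + Complex.cos η • (1:M4))) i j)
      + Complex.cos φ * ((-(Complex.sin η/2) • ((1:M4) + σz ⊗ₖ σz)) i j)
      + ((Complex.sin η/2) • (σz ⊗ₖ σz - (1:M4))) i j := by
  simp [Rmat, Matrix.add_apply, Matrix.sub_apply, Matrix.smul_apply, smul_eq_mul]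
  ring

private lemma Rmat_entry (η φ : ℂ) (i j k l : Fin 2) :
    Rmat η φ (i,j) (k,l) =
      if i = k ∧ j = l then
        (if i = j then Complex.sin φ * Complex.cos η - Complex.cos φ * Complex.sin η
         else -Complex.sin η)
      else if i = l ∧ j = k then Complex.sin φ else 0 := by
  fin_cases i <;> fin_cases j <;> fin_cases k <;> fin_cases l <;>
    simp [Rmat, hXXZ, σp, σm, σx, σy, σz, Matrix.one_apply, Prod.ext_iff] <;> ring

/-- symmetry, derivative at `0`, and the inversion identity for `R(φ)`. -/
theorem stmt5 (η : ℂ) :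
    (∀ φ : ℂ, (Rmat η φ)ᵀ = Rmat η φ)
    ∧ (∀ i j : Fin 2 × Fin 2,
        HasDerivAt (fun φ : ℂ => Rmat η φ i j)
          (((1/2 : ℂ) • (hXXZ (Complex.cos η) + Complex.cos η • (1 : M4))) i j) 0)
    ∧ (∀ φ : ℂ, Rmat η φ * Rmat η (-φ) = (Complex.sin η ^ 2 - Complex.sin φ ^ 2) • (1 : M4)) := by
  refine ⟨?_, ?_, ?_⟩
  · intro φ
    ext ⟨i,j⟩ ⟨k,l⟩
    fin_cases i <;> fin_cases j <;> fin_cases k <;> fin_cases l <;>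
      simp [Rmat, hXXZ, σp, σm, σx, σy, σz, Matrix.one_apply, Prod.ext_iff] <;> ring_nf
  · intro i j
    simp only [Rmat_apply']
    have h := (((Complex.hasDerivAt_sin 0).mul_const
        (((1/2:ℂ) • (hXXZ (Complex.cos η) + Complex.cos η • (1:M4))) i j)).add
      ((Complex.hasDerivAt_cos 0).mul_const
        ((-(Complex.sin η/2) • ((1:M4) + σz ⊗ₖ σz)) i j))).add_const
      (((Complex.sin η/2) • (σz ⊗ₖ σz - (1:M4))) i j)
    simpa using h
  · intro φ
    have h1 : Complex.cos η ^ 2 = 1 - Complex.sin η ^ 2 := by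
      linear_combination Complex.sin_sq_add_cos_sq η
    have h2 : Complex.cos φ ^ 2 = 1 - Complex.sin φ ^ 2 := by
      linear_combination Complex.sin_sq_add_cos_sq φ
    ext ⟨i,j⟩ ⟨k,l⟩
    simp only [Matrix.mul_apply, Fintype.sum_prod_type, Fin.sum_univ_two,
      Rmat_entry, Matrix.smul_apply, Matrix.one_apply, Complex.sin_neg, Complex.cos_neg,
      smul_eq_mul, Prod.mk.injEq]
    fin_cases i <;> fin_cases j <;> fin_cases k <;> fin_cases l <;>
      simp <;> ring_nf <;> simp only [h1, h2] <;> ring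

end
end

section
/- Let η, s, φ ∈ ℂ with sin η ≠ 0 and let L(φ,s) = Σ_{α∈{0,z,+,−}} L^α(φ,s)⊗σ^α be the Lax operator on V⊗ℂ². Define the partial transpose in the physical space L^T(φ,s) = Σ_α L^α(φ,s)⊗(σ^α)ᵀ. Then (1_V ⊗ σˣ)·L(φ,s)·(1_V ⊗ σˣ) = L^T(π−φ, s), i.e. the Lax operator is invariant under the combined spin reversal in the physical space and replacement φ ↦ π−φ with transposition. -/
open Matrix

noncomputable section

/-- The Verma module: finitely supported sequences, with basis `|k⟩ = single k 1`. -/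
abbrev Vsp : Type := ℕ →₀ ℂ

/-- Endomorphisms of the Verma module. -/
abbrev VOp : Type := Module.End ℂ Vsp

/-- The endomorphism sending the basis vector `|k⟩` to `v k`. -/
def mkOp (v : ℕ → Vsp) : VOp :=
  Finsupp.lsum ℂ (fun k => LinearMap.toSpanSingleton ℂ Vsp (v k))

/-- Diagonal operator `|k⟩ ↦ d k • |k⟩`. -/
def diagOp (d : ℕ → ℂ) : VOp := mkOp fun k => Finsupp.single k (d k)

/-- `s⁺_s |k⟩ = (sin(kη)/sin η)|k−1⟩`, with `s⁺_s |0⟩ = 0`. -/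
def spOp (η : ℂ) : VOp :=
  mkOp fun k => if k = 0 then 0
    else Finsupp.single (k-1) (Complex.sin ((k:ℂ) * η) / Complex.sin η)

/-- `s⁻_s |k⟩ = (sin((2s−k)η)/sin η)|k+1⟩`. -/
def smOp (η s : ℂ) : VOp :=
  mkOp fun k => Finsupp.single (k+1) (Complex.sin ((2*s - (k:ℂ)) * η) / Complex.sin η)

/-- The diagonal operator `cos(η s^z_s) : |k⟩ ↦ cos(η(s−k))|k⟩`. -/
def cosSz (η s : ℂ) : VOp := diagOp fun k => Complex.cos (η * (s - (k:ℂ)))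

/-- The diagonal operator `sin(η s^z_s) : |k⟩ ↦ sin(η(s−k))|k⟩`. -/
def sinSz (η s : ℂ) : VOp := diagOp fun k => Complex.sin (η * (s - (k:ℂ)))

/-- Operators on `V ⊗ ℂ²`, realized as 2×2 matrices with entries in `End V`. -/
abbrev LaxOp : Type := Matrix (Fin 2) (Fin 2) VOp

/-- `A ⊗ a` for `A : End V` and a 2×2 matrix `a`. -/
def tensV (A : VOp) (a : M2) : LaxOp := Matrix.of fun i j => a i j • A

/-- The Lax operator `L(φ,s) = Σ_α L^α(φ,s) ⊗ σ^α`. -/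
def Lax (η s φ : ℂ) : LaxOp :=
  tensV (Complex.sin φ • cosSz η s) σ0 + tensV (Complex.cos φ • sinSz η s) σz
    + tensV (Complex.sin η • smOp η s) σp + tensV (Complex.sin η • spOp η) σm

/-- The partial transpose `L^T(φ,s) = Σ_α L^α(φ,s) ⊗ (σ^α)ᵀ`. -/
def LaxT (η s φ : ℂ) : LaxOp :=
  tensV (Complex.sin φ • cosSz η s) σ0ᵀ + tensV (Complex.cos φ • sinSz η s) σzᵀ
    + tensV (Complex.sin η • smOp η s) σpᵀ + tensV (Complex.sin η • spOp η) σmᵀ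

lemma tensV_apply (A : VOp) (a : M2) (i j : Fin 2) : tensV A a i j = a i j • A := rfl

/-- `(1⊗σˣ)·L(φ,s)·(1⊗σˣ) = L^T(π−φ,s)`. -/
theorem stmt6 (η s φ : ℂ) (hη : Complex.sin η ≠ 0) :
    tensV (1 : VOp) σx * Lax η s φ * tensV (1 : VOp) σx = LaxT η s ((Real.pi : ℂ) - φ) := Matrix.ext fun i j => by
  fin_cases i <;> fin_cases j <;>
    simp [Matrix.mul_apply, Fin.sum_univ_two, Lax, LaxT, tensV_apply, σx, σ0, σz, σp, σy, σm,
      Matrix.transpose, Complex.sin_sub, Complex.cos_sub, Complex.sin_pi, Complex.cos_pi,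
      smul_mul_assoc, mul_smul_comm, smul_smul] <;>
    module

end
end

section
/- Let l, m be coprime positive integers with m ≥ 2, set η = πl/m, c_k = cos(kη), s_k = sin(kη), and let φ, φ' ∈ ℂ with sin φ · sin φ' ≠ 0 and sin(m(φ+φ')) ≠ 0. Define the (m−1)×(m−1) tridiagonal matrix T(φ,φ') with rows and columns indexed by k ∈ {1,…,m−1}: T_{k,k} = c_k² + cot φ · cot φ' · s_k², T_{k,k+1} = T_{k+1,k} = |s_k·s_{k+1}|/(2 sin φ sin φ') for 1 ≤ k ≤ m−2, and all other entries zero. If 1 − T(φ,φ') is invertible, then the (1,1) entry of its inverse equals ((1 − T(φ,φ'))^{−1})_{1,1} = −2·sin φ·sin φ'·sin((m−1)(φ+φ')) / ( sin²(πl/m)·sin(m(φ+φ')) ). -/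
open Matrix

noncomputable section

/-- `c_k = cos(k π l / m)`. -/
def ck (l m k : ℕ) : ℝ := Real.cos ((k:ℝ) * (Real.pi * (l:ℝ) / (m:ℝ)))

/-- `s_k = sin(k π l / m)`. -/
def sk (l m k : ℕ) : ℝ := Real.sin ((k:ℝ) * (Real.pi * (l:ℝ) / (m:ℝ)))



/-- tridiagonal matrix with diagonal `a` and symmetric off-diagonal `b`. -/
def tri (a b : ℕ → ℂ) (n : ℕ) : Matrix (Fin n) (Fin n) ℂ :=
  Matrix.of fun i j =>
    if (i:ℕ) = (j:ℕ) then a i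
    else if (i:ℕ) + 1 = (j:ℕ) then b i
    else if (j:ℕ) + 1 = (i:ℕ) then b j
    else 0

/-- continuant -/
def cont (a b : ℕ → ℂ) : ℕ → ℂ
  | 0 => 1
  | 1 => a 0
  | (n+2) => a 0 * cont (fun k => a (k+1)) (fun k => b (k+1)) (n+1)
      - (b 0)^2 * cont (fun k => a (k+2)) (fun k => b (k+2)) n

lemma tri_sub_succ_succ (a b : ℕ → ℂ) (n : ℕ) :
    (tri a b (n+1)).submatrix Fin.succ Fin.succ
      = tri (fun k => a (k+1)) (fun k => b (k+1)) n := by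
  ext i j
  simp only [tri, submatrix_apply, of_apply, Fin.val_succ]
  rcases lt_trichotomy (i:ℕ) (j:ℕ) with h | h | h <;>
    simp [h, Nat.succ_inj, show (i:ℕ)+1 = (j:ℕ)+1 ↔ (i:ℕ) = j from by omega] <;> omega

lemma det_tri (n : ℕ) : ∀ (a b : ℕ → ℂ), (tri a b n).det = cont a b n := by
  induction n using Nat.strong_induction_on with
  | _ n ih =>
    match n with
    | 0 => intro a b; simp [cont, Matrix.det_fin_zero]
    | 1 => intro a b; rw [Matrix.det_fin_one]; simp [cont, tri]
    | (n+2) =>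
      intro a b
      rw [Matrix.det_succ_row_zero, Fin.sum_univ_succ, Fin.sum_univ_succ]
      have hz : ∀ j : Fin n, tri a b (n+2) 0 j.succ.succ = 0 := by
        intro j
        simp [tri]
      simp only [hz, mul_zero, zero_mul, Finset.sum_const_zero, add_zero,
        Fin.succ_zero_eq_one]
      have h00 : tri a b (n+2) 0 0 = a 0 := by simp [tri]
      have h01 : tri a b (n+2) 0 1 = b 0 := by simp [tri]
      rw [h00, h01]
      -- first submatrix
      have e0 : (0 : Fin (n+2)).succAbove = Fin.succ := by
        funext k; simp [Fin.succAbove]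
      rw [e0, tri_sub_succ_succ, ih (n+1) (by omega)]
      -- second submatrix : expand along first column
      have B := (tri a b (n+2)).submatrix Fin.succ (1 : Fin (n+2)).succAbove
      rw [Matrix.det_succ_column_zero ((tri a b (n+2)).submatrix Fin.succ (1 : Fin (n+2)).succAbove)]
      rw [Fin.sum_univ_succ]
      have hz2 : ∀ i : Fin n,
          (tri a b (n+2)).submatrix Fin.succ (1 : Fin (n+2)).succAbove i.succ 0 = 0 := by
        intro i
        have : ((1 : Fin (n+2)).succAbove 0 : ℕ) = 0 := by
          simp [Fin.succAbove]
        simp [tri, Matrix.submatrix_apply, this]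
      simp only [hz2, mul_zero, zero_mul, Finset.sum_const_zero, add_zero]
      have hB00 : (tri a b (n+2)).submatrix Fin.succ (1 : Fin (n+2)).succAbove 0 0 = b 0 := by
        have : ((1 : Fin (n+2)).succAbove 0 : ℕ) = 0 := by simp [Fin.succAbove]
        simp [tri, Matrix.submatrix_apply, this]
      rw [hB00]
      have hsub2 : ((tri a b (n+2)).submatrix Fin.succ (1 : Fin (n+2)).succAbove).submatrix
            (0 : Fin (n+1)).succAbove Fin.succ
          = tri (fun k => a (k+2)) (fun k => b (k+2)) n := by
        ext i j
        have hr : (((0 : Fin (n+1)).succAbove i).succ : ℕ) = (i:ℕ) + 2 := by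
          simp [Fin.succAbove]
        have hc : ((1 : Fin (n+2)).succAbove j.succ : ℕ) = (j:ℕ) + 2 := by
          simp [Fin.succAbove, Fin.lt_def]
        simp only [tri, Matrix.submatrix_apply, of_apply, hr, hc]
        rcases lt_trichotomy (i:ℕ) (j:ℕ) with h | h | h <;>
          simp_all <;> omega
      rw [hsub2, ih n (by omega)]
      simp [cont]
      ring

end

noncomputable section
open Complex

lemma sin_step (z w : ℂ) : Complex.sin (z+w) + Complex.sin (z-w)
    = 2 * Complex.sin z * Complex.cos w := by
  rw [Complex.sin_add, Complex.sin_sub]; ring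

lemma cont_eq (ψ X : ℂ) (g : ℕ → ℂ) :
    ∀ n s (a b : ℕ → ℂ), (∀ k, a k = X * g (s+k+1)^2 * Complex.cos ψ) →
      (∀ k, (b k)^2 = X^2 * g (s+k+1)^2 * g (s+k+2)^2 / 4) →
      cont a b n * Complex.sin ψ =
        (∏ j ∈ Finset.range n, g (s+j+1)^2) * X^n / 2^n * Complex.sin (((n:ℂ)+1) * ψ) := by
  intro n
  induction n using Nat.strong_induction_on with
  | _ n ih =>
    match n with
    | 0 => intro s a b ha hb; simp [cont]
    | 1 =>
      intro s a b ha hb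
      simp only [cont, ha 0, Finset.prod_range_one, pow_one, Nat.cast_one]
      rw [show ((1:ℂ)+1) * ψ = ψ + ψ by ring, Complex.sin_add]
      ring
    | (n+2) =>
      intro s a b ha hb
      have h1 := ih (n+1) (by omega) (s+1) (fun k => a (k+1)) (fun k => b (k+1))
        (fun k => by
          have h := ha (k+1)
          rw [show s+(k+1)+1 = s+1+k+1 from by omega] at h
          exact h)
        (fun k => by
          have h := hb (k+1)
          rw [show s+(k+1)+1 = s+1+k+1 from by omega,
            show s+(k+1)+2 = s+1+k+2 from by omega] at h
          exact h)
      have h2 := ih n (by omega) (s+2) (fun k => a (k+2)) (fun k => b (k+2))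
        (fun k => by
          have h := ha (k+2)
          rw [show s+(k+2)+1 = s+2+k+1 from by omega] at h
          exact h)
        (fun k => by
          have h := hb (k+2)
          rw [show s+(k+2)+1 = s+2+k+1 from by omega,
            show s+(k+2)+2 = s+2+k+2 from by omega] at h
          exact h)
      have hstep : Complex.sin (((n:ℂ)+3) * ψ)
          = 2 * Complex.sin (((n:ℂ)+2) * ψ) * Complex.cos ψ - Complex.sin (((n:ℂ)+1) * ψ) := by
        have := sin_step (((n:ℂ)+2) * ψ) ψ
        have e1 : ((n:ℂ)+2) * ψ + ψ = ((n:ℂ)+3) * ψ := by ring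
        have e2 : ((n:ℂ)+2) * ψ - ψ = ((n:ℂ)+1) * ψ := by ring
        rw [e1, e2] at this
        linear_combination this
      have e3 : ((↑(n+2):ℂ)+1) = (n:ℂ)+3 := by push_cast; ring
      have e4 : ((↑(n+1):ℂ)+1) = (n:ℂ)+2 := by push_cast; ring
      rw [e4] at h1
      rw [e3]
      have hP : (∏ j ∈ Finset.range (n+2), g (s+j+1)^2)
          = g (s+1)^2 * ∏ j ∈ Finset.range (n+1), g (s+1+j+1)^2 := by
        rw [Finset.prod_range_succ']
        rw [mul_comm]
        congr 1
        apply Finset.prod_congr rfl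
        intro j _
        congr 2
        omega
      have hP1 : (∏ j ∈ Finset.range (n+1), g (s+1+j+1)^2)
          = g (s+2)^2 * ∏ j ∈ Finset.range n, g (s+2+j+1)^2 := by
        rw [Finset.prod_range_succ']
        rw [mul_comm]
        congr 1
        apply Finset.prod_congr rfl
        intro j _
        congr 2
        omega
      rw [hP1] at h1
      rw [hP]
      simp only [cont]
      rw [ha 0, hb 0]
      have hs1 : s + 0 + 1 = s + 1 := by omega
      have hs2 : s + 0 + 2 = s + 2 := by omega
      rw [hs1, hs2]
      set P2 := ∏ j ∈ Finset.range n, g (s+2+j+1)^2 with hP2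
      linear_combination (X * g (s+1)^2 * Complex.cos ψ) * h1
        - (X^2 * g (s+1)^2 * g (s+2)^2 / 4) * h2
        - (g (s+1)^2 * g (s+2)^2 * P2 * X^(n+2) / 2^(n+2)) * hstep
        - (X^(n+2) * g (s+1)^2 * Complex.sin (((n:ℂ)+3) * ψ) / 2^(n+2)) * hP1

lemma inv_00 {n : ℕ} (A : Matrix (Fin (n+1)) (Fin (n+1)) ℂ) :
    A⁻¹ 0 0 = Ring.inverse A.det * (A.submatrix Fin.succ Fin.succ).det := by
  rw [Matrix.inv_def, Matrix.smul_apply, smul_eq_mul]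
  congr 1
  rw [Matrix.adjugate_apply, Matrix.det_succ_row_zero, Fin.sum_univ_succ]
  have e0 : (0 : Fin (n+1)).succAbove = Fin.succ := by
    funext k; simp [Fin.succAbove]
  simp only [Matrix.updateRow_self, Pi.single_eq_same, Fin.val_zero, pow_zero, one_mul,
    Pi.single_eq_of_ne (Fin.succ_ne_zero _), mul_zero, zero_mul, Finset.sum_const_zero,
    add_zero, e0]
  rw [show Fin.succ = (0 : Fin (n+1)).succAbove from e0.symm,
    Matrix.submatrix_updateRow_succAbove]

set_option maxHeartbeats 2000000 in
/-- the (1,1) entry of the inverse of `1 − T(φ,φ')` for the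
tridiagonal transfer matrix of the gapless XXZ chain at `η = πl/m`. -/
theorem stmt13 (l m : ℕ) (hl : 0 < l) (hm : 2 ≤ m) (hco : Nat.Coprime l m)
    (φ φ' : ℂ) (hφ : Complex.sin φ * Complex.sin φ' ≠ 0)
    (hden : Complex.sin ((m:ℂ) * (φ + φ')) ≠ 0)
    (T : Matrix (Fin (m-1)) (Fin (m-1)) ℂ)
    (hT : T = Matrix.of fun (i j : Fin (m-1)) =>
      if i = j then
        ((ck l m ((i:ℕ)+1) : ℝ) : ℂ)^2
          + (Complex.cos φ / Complex.sin φ) * (Complex.cos φ' / Complex.sin φ')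
            * ((sk l m ((i:ℕ)+1) : ℝ) : ℂ)^2
      else if (i:ℕ)+1 = (j:ℕ) ∨ (j:ℕ)+1 = (i:ℕ) then
        ((|sk l m (min (i:ℕ) (j:ℕ) + 1) * sk l m (min (i:ℕ) (j:ℕ) + 2)| : ℝ) : ℂ)
          / (2 * Complex.sin φ * Complex.sin φ')
      else 0)
    (hinv : IsUnit (1 - T)) :
    (1 - T)⁻¹ ⟨0, by omega⟩ ⟨0, by omega⟩
      = (-2) * Complex.sin φ * Complex.sin φ' * Complex.sin (((m:ℂ) - 1) * (φ + φ'))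
        / (((sk l m 1 : ℝ) : ℂ)^2 * Complex.sin ((m:ℂ) * (φ + φ'))) := by
  obtain ⟨n, rfl⟩ : ∃ n, m = n + 2 := ⟨m - 2, by omega⟩
  have hsφ : Complex.sin φ ≠ 0 := fun h => hφ (by rw [h, zero_mul])
  have hsφ' : Complex.sin φ' ≠ 0 := fun h => hφ (by rw [h, mul_zero])
  set ψ := φ + φ' with hψdef
  set X : ℂ := -(Complex.sin φ * Complex.sin φ')⁻¹ with hXdef
  set g : ℕ → ℂ := fun k => ((sk l (n+2) k : ℝ) : ℂ) with hgdef
  set aa : ℕ → ℂ := fun k => X * g (k+1)^2 * Complex.cos ψ with haadef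
  set bb : ℕ → ℂ := fun k =>
    X * ((|sk l (n+2) (k+1) * sk l (n+2) (k+2)| : ℝ) : ℂ) / 2 with hbbdef
  -- diagonal identity
  have hdiag : ∀ k : ℕ, (1:ℂ) - (((ck l (n+2) k : ℝ) : ℂ)^2
      + (Complex.cos φ / Complex.sin φ) * (Complex.cos φ' / Complex.sin φ')
        * ((sk l (n+2) k : ℝ) : ℂ)^2) = X * g k ^2 * Complex.cos ψ := by
    intro k
    have hr : (ck l (n+2) k)^2 = 1 - (sk l (n+2) k)^2 := by
      have := Real.sin_sq_add_cos_sq ((k:ℝ) * (Real.pi * (l:ℝ) / ((n+2:ℕ):ℝ)))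
      unfold ck sk
      nlinarith [this]
    have hc : ((ck l (n+2) k : ℝ) : ℂ)^2 = 1 - g k ^2 := by
      have h2 := congrArg (fun x : ℝ => (x:ℂ)) hr
      push_cast at h2
      simpa [hgdef] using h2
    rw [hc, hXdef, hψdef, Complex.cos_add]
    field_simp
    ring
  -- b squared identity
  have hbsq : ∀ k : ℕ, (bb k)^2 = X^2 * g (k+1)^2 * g (k+2)^2 / 4 := by
    intro k
    have hr : |sk l (n+2) (k+1) * sk l (n+2) (k+2)|^2
        = (sk l (n+2) (k+1))^2 * (sk l (n+2) (k+2))^2 := by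
      rw [_root_.sq_abs, mul_pow]
    have h2 := congrArg (fun x : ℝ => (x:ℂ)) hr
    push_cast at h2
    simp only [hbbdef, hgdef]
    rw [div_pow, mul_pow, h2]
    ring
  -- matrix identification
  have hM : 1 - T = tri aa bb (n+1) := by
    subst hT
    ext i j
    simp only [Matrix.sub_apply, Matrix.one_apply, Matrix.of_apply, tri]
    by_cases hij : i = j
    · subst hij
      simp only [if_pos rfl]
      exact hdiag ((i:ℕ)+1)
    · have hijn : ¬ ((i:ℕ) = (j:ℕ)) := fun h => hij (Fin.ext h)
      simp only [if_neg hij, if_neg hijn]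
      by_cases h1 : (i:ℕ)+1 = (j:ℕ)
      · have hmin : min (i:ℕ) (j:ℕ) = (i:ℕ) := by omega
        simp only [if_pos h1, if_pos (Or.inl h1), hmin, hbbdef, hXdef]
        field_simp
        ring
      · by_cases h2 : (j:ℕ)+1 = (i:ℕ)
        · have hmin : min (i:ℕ) (j:ℕ) = (j:ℕ) := by omega
          simp only [if_neg h1, if_pos h2, if_pos (Or.inr h2), hmin, hbbdef, hXdef]
          field_simp
          ring
        · simp only [if_neg h1, if_neg h2, if_neg (show ¬((i:ℕ)+1 = (j:ℕ) ∨ (j:ℕ)+1 = (i:ℕ)) from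
            by tauto)]
          ring
  -- sin ψ ≠ 0
  have hψ : Complex.sin ψ ≠ 0 := by
    intro h
    obtain ⟨k, hk⟩ := Complex.sin_eq_zero_iff.mp h
    apply hden
    apply Complex.sin_eq_zero_iff.mpr
    exact ⟨(n+2) * k, by rw [hk]; push_cast; ring⟩
  have hsin2 : Complex.sin (((n:ℂ)+2) * ψ) ≠ 0 := by
    have : ((n+2:ℕ):ℂ) = (n:ℂ)+2 := by push_cast; ring
    rwa [this] at hden
  -- continuant values
  have hc0 := cont_eq ψ X g (n+1) 0 aa bb
    (fun k => by simp only [haadef, Nat.zero_add]) (fun k => by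
      simpa only [Nat.zero_add] using hbsq k)
  have hc1 := cont_eq ψ X g n 1 (fun k => aa (k+1)) (fun k => bb (k+1))
    (fun k => by simp only [haadef]; rw [show 1+k+1 = (k+1)+1 from by omega])
    (fun k => by
      have := hbsq (k+1)
      rw [show (k+1)+1 = 1+k+1 from by omega, show (k+1)+2 = 1+k+2 from by omega] at this
      exact this)
  have hP0 : (∏ j ∈ Finset.range (n+1), g (0+j+1)^2)
      = g 1 ^2 * ∏ j ∈ Finset.range n, g (1+j+1)^2 := by
    rw [Finset.prod_range_succ', mul_comm]
    congr 1
    apply Finset.prod_congr rfl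
    intro j _
    congr 2
    omega
  -- nonvanishing
  rw [hM] at hinv
  have hdet0 : cont aa bb (n+1) ≠ 0 := by
    rw [← det_tri]
    exact (Matrix.isUnit_iff_isUnit_det _).mp hinv |>.ne_zero
  have hX : X ≠ 0 := by
    simp only [hXdef, ne_eq, neg_eq_zero, inv_eq_zero]
    exact hφ
  have hcast1 : ((n+1:ℕ):ℂ) + 1 = (n:ℂ)+2 := by push_cast; ring
  have hcast2 : ((n:ℕ):ℂ) + 1 = (n:ℂ)+1 := by push_cast; ring
  rw [hcast1] at hc0
  rw [hcast2] at hc1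
  have hP0ne : (∏ j ∈ Finset.range (n+1), g (0+j+1)^2) ≠ 0 := by
    intro h
    apply hdet0
    have := hc0
    rw [h] at this
    simp only [zero_mul, zero_div] at this
    exact (mul_eq_zero.mp this).resolve_right hψ
  have hg1 : g 1 ≠ 0 := by
    intro h
    apply hP0ne
    rw [hP0, h]
    ring
  have hP1ne : (∏ j ∈ Finset.range n, g (1+j+1)^2) ≠ 0 := by
    intro h
    apply hP0ne
    rw [hP0, h, mul_zero]
  -- main computation
  rw [hM]
  show (tri aa bb (n+1))⁻¹ 0 0 = _
  rw [inv_00, tri_sub_succ_succ, det_tri, det_tri, Ring.inverse_eq_inv']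
  rw [inv_mul_eq_div]
  have hXS : X * (Complex.sin φ * Complex.sin φ') = -1 := by
    rw [hXdef]
    field_simp
  have hcast3 : (((n+2:ℕ):ℂ) - 1) = (n:ℂ)+1 := by push_cast; ring
  have hcast4 : ((n+2:ℕ):ℂ) = (n:ℂ)+2 := by push_cast; ring
  rw [hcast3, hcast4]
  have hg1' : ((sk l (n+2) 1 : ℝ):ℂ) = g 1 := rfl
  rw [hg1']
  rw [div_eq_div_iff hdet0 (by
    exact mul_ne_zero (pow_ne_zero 2 hg1) hsin2)]
  apply mul_right_cancel₀ hψ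
  have hcont1 : cont (fun k => aa (k+1)) (fun k => bb (k+1)) n
      = (∏ j ∈ Finset.range n, g (1+j+1)^2) * X^n / 2^n * Complex.sin (((n:ℂ)+1) * ψ)
        / Complex.sin ψ := by
    rw [eq_div_iff hψ]; exact hc1
  have hcont0 : cont aa bb (n+1)
      = (∏ j ∈ Finset.range (n+1), g (0+j+1)^2) * X^(n+1) / 2^(n+1)
          * Complex.sin (((n:ℂ)+2) * ψ) / Complex.sin ψ := by
    rw [eq_div_iff hψ]; exact hc0
  rw [hcont0, hcont1, hP0]
  field_simp
  linear_combination (X^n * Complex.sin (((n:ℂ)+1) * ψ)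
    * Complex.sin (ψ * ((n:ℂ)+2)) * 2^(n+1)) * hXS

end
end
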